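/- Let H = L + D as above correspond to a graph Ḡ with leader node 0 reachable to all other nodes. Then every eigenvalue of H has strictly positive real part. -/

import Mathlib

open Matrix Finset

/-- let `H = L + D` be the structure matrix of a leader-follower graph
(adjacency `a` for the followers, `a i j = 1` iff `(j,i)` is an edge, and `D = diag d`
recording the edges from the leader node `0`).  If the leader node `0` is reachable to
every other node by a directed path, then every eigenvalue of `H` has strictly
positive real part. -/
theorem structure_matrix_spectrum_pos_re {N : ℕ}
    (a : Fin N → Fin N → ℝ) (ha : ∀ i j, a i j = 0 ∨ a i j = 1) (ha0 : ∀ i, a i i = 0)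
    (d : Fin N → ℝ) (hd : ∀ i, d i = 0 ∨ d i = 1)
    (hconn : ∀ i : Fin N,
      Relation.ReflTransGen
        (fun u v : Option (Fin N) =>
          match u, v with
          | none, some i => d i = 1
          | some j, some i => a i j = 1
          | _, none => False)
        none (some i)) :
    ∀ μ ∈ spectrum ℂ
      ((Matrix.diagonal (fun i => ∑ j ∈ Finset.univ.erase i, a i j) - Matrix.of a
          + Matrix.diagonal d).map (Complex.ofReal)),
      0 < μ.re := by
  intro μ hμ
  by_contra hre
  push_neg at hre
  set H : Matrix (Fin N) (Fin N) ℂ :=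
    (Matrix.diagonal (fun i => ∑ j ∈ Finset.univ.erase i, a i j) - Matrix.of a
      + Matrix.diagonal d).map (Complex.ofReal) with hH
  rw [spectrum.mem_iff] at hμ
  have hdet : (algebraMap ℂ (Matrix (Fin N) (Fin N) ℂ) μ - H).det = 0 := by
    by_contra h
    exact hμ ((Matrix.isUnit_iff_isUnit_det _).2 (isUnit_iff_ne_zero.2 h))
  obtain ⟨v, hv0, hveq⟩ := (Matrix.exists_mulVec_eq_zero_iff).2 hdet
  have hv : ∀ i, H.mulVec v i = μ * v i := by
    intro i
    have h := congrFun hveq i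
    rw [Matrix.sub_mulVec, Algebra.algebraMap_eq_smul_one, Matrix.smul_mulVec,
      Matrix.one_mulVec] at h
    have h2 : μ • v i - H.mulVec v i = 0 := h
    have h3 : μ * v i = H.mulVec v i := by
      simpa [sub_eq_zero, smul_eq_mul] using h2
    exact h3.symm
  -- row equation
  have hrow : ∀ i, ((∑ j, a i j : ℝ) + (d i : ℝ) - μ) * v i = ∑ j, (a i j : ℂ) * v j := by
    intro i
    have h := hv i
    have hcdiag : (∑ j ∈ Finset.univ.erase i, a i j) = ∑ j, a i j :=
      Finset.sum_erase _ (ha0 i)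
    have hcomp : H.mulVec v i
        = ((∑ j, a i j : ℝ) + (d i : ℝ)) * v i - ∑ j, (a i j : ℂ) * v j := by
      simp only [hH, Matrix.mulVec, dotProduct, Matrix.map_apply, Matrix.add_apply,
        Matrix.sub_apply, Matrix.diagonal_apply, Matrix.of_apply, hcdiag]
      push_cast
      simp only [apply_ite Complex.ofReal, Complex.ofReal_zero, sub_mul, add_mul, Finset.sum_add_distrib, Finset.sum_sub_distrib,
        ite_mul, zero_mul, Finset.sum_ite_eq, Finset.mem_univ, if_true]
      push_cast
      ring
    rw [hcomp] at h
    linear_combination h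
  -- maximal modulus index
  obtain ⟨k, hk⟩ := Function.ne_iff.1 hv0
  obtain ⟨i₀, -, hmax⟩ := Finset.exists_max_image Finset.univ (fun i => norm (v i))
    ⟨k, Finset.mem_univ k⟩
  set M : ℝ := norm (v i₀) with hMdef
  have hmax' : ∀ j, norm (v j) ≤ M := fun j => hmax j (Finset.mem_univ j)
  have hM : 0 < M := lt_of_lt_of_le (norm_pos_iff.2 hk) (hmax' k)
  have hann : ∀ i j, 0 ≤ a i j := by
    intro i j; rcases ha i j with h | h <;> simp [h]
  have hdnn : ∀ i, 0 ≤ d i := by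
    intro i; rcases hd i with h | h <;> simp [h]
  -- key lemma
  have key : ∀ i, norm (v i) = M →
      d i = 0 ∧ ∀ j, a i j = 1 → norm (v j) = M := by
    intro i hi
    set S : ℝ := ∑ j, a i j with hSdef
    set z : ℂ := (S : ℝ) + (d i : ℝ) - μ with hzdef
    have hz : z * v i = ∑ j, (a i j : ℂ) * v j := hrow i
    have e1 : norm (∑ j, (a i j : ℂ) * v j) ≤ ∑ j, a i j * norm (v j) := by
      refine le_trans (norm_sum_le _ _) (le_of_eq ?_)
      refine Finset.sum_congr rfl fun j _ => ?_
      rw [norm_mul, Complex.norm_real, Real.norm_eq_abs, abs_of_nonneg (hann i j)]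
    have e2 : ∑ j, a i j * norm (v j) ≤ ∑ j, a i j * M :=
      Finset.sum_le_sum fun j _ => mul_le_mul_of_nonneg_left (hmax' j) (hann i j)
    have hSM : ∑ j, a i j * M = S * M := (Finset.sum_mul _ _ _).symm
    have e3 : norm (∑ j, (a i j : ℂ) * v j) = norm z * M := by
      rw [← hz, norm_mul, hi]
    have habs : norm z ≤ S := by
      have h1 : norm z * M ≤ S * M := by
        rw [← e3, ← hSM]; exact le_trans e1 e2
      exact le_of_mul_le_mul_right h1 hM
    have hrez : z.re = S + d i - μ.re := by
      simp [hzdef, Complex.sub_re, Complex.add_re]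
    have hre_le : S + d i - μ.re ≤ S := by
      calc S + d i - μ.re = z.re := hrez.symm
        _ ≤ norm z := Complex.re_le_norm z
        _ ≤ S := habs
    have hd0 : d i = 0 := le_antisymm (by linarith) (hdnn i)
    have hμre : μ.re = 0 := le_antisymm hre (by linarith)
    have habs_eq : norm z = S := by
      refine le_antisymm habs ?_
      calc S = z.re := by rw [hrez, hd0, hμre]; ring
        _ ≤ norm z := Complex.re_le_norm z
    have hfinal : ∑ j, a i j * norm (v j) = ∑ j, a i j * M := by
      refine le_antisymm e2 ?_
      rw [hSM, ← habs_eq]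
      calc norm z * M = norm (∑ j, (a i j : ℂ) * v j) := e3.symm
        _ ≤ ∑ j, a i j * norm (v j) := e1
    have heach := (Finset.sum_eq_sum_iff_of_le
      (fun j _ => mul_le_mul_of_nonneg_left (hmax' j) (hann i j))).1 hfinal
    refine ⟨hd0, fun j hj => ?_⟩
    have := heach j (Finset.mem_univ j)
    rw [hj] at this
    simpa using this
  -- induction along reachability
  have main : ∀ x : Option (Fin N),
      Relation.ReflTransGen
        (fun u v : Option (Fin N) =>
          match u, v with
          | none, some i => d i = 1
          | some j, some i => a i j = 1
          | _, none => False)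
        none x →
      ∀ i, x = some i → norm (v i) ≠ M := by
    intro x hx
    induction hx with
    | refl => intro i h; cases h
    | @tail b c hab hbc ih =>
      intro i hi habs
      subst hi
      cases b with
      | none =>
        have h1 : d i = 1 := hbc
        have h0 : d i = 0 := (key i habs).1
        rw [h0] at h1; norm_num at h1
      | some j =>
        have haij : a i j = 1 := hbc
        exact ih j rfl ((key i habs).2 j haij)
  exact main (some i₀) (hconn i₀) i₀ rfl rfl
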